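/- Let n ≥ 1 and let a, b : Fin n → ℝ² be points such that the 2n points a₀,b₀,…,a_{n-1},b_{n-1} are pairwise distinct and no three of them are collinear. Suppose the matching M = {(aᵢ,bᵢ) : i ∈ Fin n} is pairwise crossing: for all i ≠ j, the open segments (aᵢ,bᵢ) and (aⱼ,bⱼ) have a common point. Then M is globally maximum: for every fixed-point-free involution τ on the set of the 2n endpoints, (1/2)·Σ_{x} dist(x, τ(x)) ≤ Σᵢ dist(aᵢ,bᵢ). -/

import Mathlib

open Finset

noncomputable section

/-- The Euclidean plane. -/
abbrev Pt : Type := EuclideanSpace ℝ (Fin 2)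

/-- The set of endpoints of the matching with edges `(a i, b i)`. -/
def endpts {n : ℕ} (a b : Fin n → Pt) : Finset Pt :=
  letI := Classical.decEq Pt
  (Finset.univ.image a) ∪ (Finset.univ.image b)

/-- `σ` is a perfect matching on the finite point set `S`:
a fixed-point-free involution of `S`. -/
def IsFpfInvolOn (S : Finset Pt) (σ : Pt → Pt) : Prop :=
  (∀ x ∈ S, σ x ∈ S) ∧ (∀ x ∈ S, σ (σ x) = x) ∧ (∀ x ∈ S, σ x ≠ x)

open Real intervalIntegral

/-- Projection of a planar point onto the direction `(cos θ, sin θ)`. -/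
def proj (θ : ℝ) (x : Pt) : ℝ := x 0 * Real.cos θ + x 1 * Real.sin θ

lemma integral_abs_cos : ∫ θ in (0:ℝ)..(2*π), |Real.cos θ| = 4 := by
  have hper : Function.Periodic (fun θ : ℝ => |Real.cos θ|) (2*π) := fun x => by
    simp [Real.cos_add_two_pi]
  have h1 : ∫ θ in (0:ℝ)..(2*π), |Real.cos θ|
      = ∫ θ in (-(π/2))..(-(π/2)+2*π), |Real.cos θ| := by
    have := hper.intervalIntegral_add_eq (-(π/2)) 0
    simpa using this.symm
  have hsplit : ∫ θ in (-(π/2))..(-(π/2)+2*π), |Real.cos θ|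
      = (∫ θ in (-(π/2))..(π/2), |Real.cos θ|) + ∫ θ in (π/2)..(-(π/2)+2*π), |Real.cos θ| := by
    rw [integral_add_adjacent_intervals] <;>
      exact (Real.continuous_cos.abs.intervalIntegrable _ _)
  have e1 : ∫ θ in (-(π/2))..(π/2), |Real.cos θ| = 2 := by
    rw [integral_congr (g := Real.cos) ?_]
    · rw [integral_cos]; simp; norm_num
    · intro x hx
      have hle : -(π/2) ≤ π/2 := by linarith [Real.pi_pos]
      rw [Set.uIcc_of_le hle] at hx
      exact abs_of_nonneg (Real.cos_nonneg_of_mem_Icc ⟨hx.1, hx.2⟩)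
  have e2 : ∫ θ in (π/2)..(-(π/2)+2*π), |Real.cos θ| = 2 := by
    rw [integral_congr (g := fun θ => -Real.cos θ) ?_]
    · rw [intervalIntegral.integral_neg, integral_cos]
      have : (-(π/2)+2*π) = 3*π/2 := by ring
      rw [this]
      rw [show (3*π/2) = π + π/2 by ring]
      simp [Real.sin_add]; norm_num
    · intro x hx
      have hle : π/2 ≤ -(π/2)+2*π := by linarith [Real.pi_pos]
      rw [Set.uIcc_of_le hle] at hx
      have : Real.cos x ≤ 0 := Real.cos_nonpos_of_pi_div_two_le_of_le hx.1 (by linarith [hx.2])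
      simp [abs_of_nonpos this]
  rw [h1, hsplit, e1, e2]; norm_num

lemma integral_abs_lin (A B : ℝ) :
    ∫ θ in (0:ℝ)..(2*π), |A * Real.cos θ + B * Real.sin θ| = 4 * Real.sqrt (A^2 + B^2) := by
  rcases eq_or_ne (A^2 + B^2) 0 with h0 | h0
  · have hA : A = 0 := by nlinarith [sq_nonneg A, sq_nonneg B]
    have hB : B = 0 := by nlinarith [sq_nonneg A, sq_nonneg B]
    simp [hA, hB]
  · set z : ℂ := ⟨A, B⟩ with hz
    have hzne : z ≠ 0 := by
      intro h
      apply h0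
      have : A = 0 ∧ B = 0 := by
        constructor
        · simpa using congrArg Complex.re h
        · simpa using congrArg Complex.im h
      simp [this.1, this.2]
    set r : ℝ := ‖z‖ with hr
    set φ : ℝ := Complex.arg z with hφ
    have hA' : r * Real.cos φ = A := Complex.norm_mul_cos_arg z
    have hB' : r * Real.sin φ = B := Complex.norm_mul_sin_arg z
    have hrsqrt : r = Real.sqrt (A^2 + B^2) := by
      rw [hr, Complex.norm_def, Complex.normSq_apply]
      norm_num [hz, sq]
    have key : ∀ θ : ℝ, A * Real.cos θ + B * Real.sin θ = r * Real.cos (θ - φ) := by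
      intro θ
      rw [Real.cos_sub, ← hA', ← hB']
      ring
    have hrpos : 0 ≤ r := norm_nonneg z
    calc ∫ θ in (0:ℝ)..(2*π), |A * Real.cos θ + B * Real.sin θ|
        = ∫ θ in (0:ℝ)..(2*π), r * |Real.cos (θ - φ)| := by
          apply integral_congr; intro x _
          simp only []
          rw [key x, abs_mul, abs_of_nonneg hrpos]
      _ = r * ∫ θ in (0:ℝ)..(2*π), |Real.cos (θ - φ)| := by
          rw [← intervalIntegral.integral_const_mul]
      _ = r * ∫ θ in (0-φ)..(2*π-φ), |Real.cos θ| := by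
          rw [intervalIntegral.integral_comp_sub_right (fun θ => |Real.cos θ|) φ]
      _ = r * ∫ θ in (0:ℝ)..(2*π), |Real.cos θ| := by
          congr 1
          have hper : Function.Periodic (fun θ : ℝ => |Real.cos θ|) (2*π) := fun x => by
            simp [Real.cos_add_two_pi]
          have := hper.intervalIntegral_add_eq (-φ) 0
          simpa [sub_eq_add_neg, add_comm] using this
      _ = 4 * Real.sqrt (A^2 + B^2) := by rw [integral_abs_cos, hrsqrt]; ring

lemma integral_abs_proj (x y : Pt) :
    ∫ θ in (0:ℝ)..(2*π), |proj θ x - proj θ y| = 4 * dist x y := by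
  have hd : dist x y = Real.sqrt ((x 0 - y 0)^2 + (x 1 - y 1)^2) := by
    rw [EuclideanSpace.dist_eq, Fin.sum_univ_two]
    simp [Real.dist_eq, sq_abs]
  have hk : ∀ θ : ℝ, proj θ x - proj θ y = (x 0 - y 0) * Real.cos θ + (x 1 - y 1) * Real.sin θ := by
    intro θ; simp only [proj]; ring
  calc ∫ θ in (0:ℝ)..(2*π), |proj θ x - proj θ y|
      = ∫ θ in (0:ℝ)..(2*π), |(x 0 - y 0) * Real.cos θ + (x 1 - y 1) * Real.sin θ| := by
        apply integral_congr; intro t _; simp only []; rw [hk t]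
    _ = 4 * dist x y := by rw [integral_abs_lin, hd]

lemma proj_continuous (x y : Pt) : Continuous (fun θ => |proj θ x - proj θ y|) := by
  apply Continuous.abs
  apply Continuous.sub <;> exact (continuous_const.mul Real.continuous_cos).add
    (continuous_const.mul Real.continuous_sin)

lemma projIntegrable (x y : Pt) :
    IntervalIntegrable (fun θ => |proj θ x - proj θ y|) MeasureTheory.volume 0 (2*π) :=
  (proj_continuous x y).intervalIntegrable _ _

lemma abs_split {p q t : ℝ} (h1 : min p q ≤ t) (h2 : t ≤ max p q) :
    |p - q| = |p - t| + |q - t| := by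
  rcases le_total p q with h | h
  · rw [min_eq_left h] at h1; rw [max_eq_right h] at h2
    rw [abs_of_nonpos (by linarith), abs_of_nonpos (by linarith), abs_of_nonneg (by linarith)]
    ring
  · rw [min_eq_right h] at h1; rw [max_eq_left h] at h2
    rw [abs_of_nonneg (by linarith), abs_of_nonneg (by linarith), abs_of_nonpos (by linarith)]
    ring

lemma proj_openSegment {θ : ℝ} {x y q : Pt} (hq : q ∈ openSegment ℝ x y) :
    min (proj θ x) (proj θ y) ≤ proj θ q ∧ proj θ q ≤ max (proj θ x) (proj θ y) := by
  obtain ⟨u, v, hu, hv, huv, rfl⟩ := hq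
  have h0 : proj θ (u • x + v • y) = u * proj θ x + v * proj θ y := by
    simp only [proj, PiLp.add_apply, PiLp.smul_apply, smul_eq_mul]
    ring
  rw [h0]
  constructor
  · calc min (proj θ x) (proj θ y)
        = u * min (proj θ x) (proj θ y) + v * min (proj θ x) (proj θ y) := by
          rw [← add_mul, huv, one_mul]
      _ ≤ u * proj θ x + v * proj θ y := by
          have h1 := min_le_left (proj θ x) (proj θ y)
          have h2 := min_le_right (proj θ x) (proj θ y)
          nlinarith
  · calc u * proj θ x + v * proj θ y
        ≤ u * max (proj θ x) (proj θ y) + v * max (proj θ x) (proj θ y) := by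
          have h1 := le_max_left (proj θ x) (proj θ y)
          have h2 := le_max_right (proj θ x) (proj θ y)
          nlinarith
      _ = max (proj θ x) (proj θ y) := by rw [← add_mul, huv, one_mul]

lemma endpts_eq_image {n : ℕ} (a b : Fin n → Pt) :
    endpts a b = letI := Classical.decEq Pt
      Finset.image (Sum.elim a b) Finset.univ := by
  classical
  ext x
  simp [endpts, Sum.exists]

lemma sum_endpts {n : ℕ} (a b : Fin n → Pt)
    (hdist : Function.Injective (Sum.elim a b : Fin n ⊕ Fin n → Pt))
    (f : Pt → ℝ) :
    ∑ x ∈ endpts a b, f x = (∑ i, f (a i)) + ∑ i, f (b i) := by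
  classical
  rw [endpts_eq_image, (letI := Classical.decEq Pt; Finset.sum_image (fun x _ y _ h => hdist h))]
  rw [Fintype.sum_sum_type]
  simp

lemma perdir {n : ℕ} (hn : 1 ≤ n) (a b : Fin n → Pt)
    (hdist : Function.Injective (Sum.elim a b : Fin n ⊕ Fin n → Pt))
    (hcross : ∀ i j : Fin n, i ≠ j →
      (openSegment ℝ (a i) (b i) ∩ openSegment ℝ (a j) (b j)).Nonempty)
    (τ : Pt → Pt) (hτ : IsFpfInvolOn (endpts a b) τ) (θ : ℝ) :
    (1/2) * ∑ x ∈ endpts a b, |proj θ x - proj θ (τ x)|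
      ≤ ∑ i, |proj θ (a i) - proj θ (b i)| := by
  classical
  have hne : (Finset.univ : Finset (Fin n)).Nonempty := ⟨⟨0, hn⟩, mem_univ _⟩
  set t : ℝ := Finset.univ.sup' hne (fun i => min (proj θ (a i)) (proj θ (b i))) with ht
  have hlb : ∀ i, min (proj θ (a i)) (proj θ (b i)) ≤ t := fun i =>
    Finset.le_sup' (fun i => min (proj θ (a i)) (proj θ (b i))) (mem_univ i)
  have hub : ∀ i, t ≤ max (proj θ (a i)) (proj θ (b i)) := by
    intro i
    apply Finset.sup'_le
    intro j _
    rcases eq_or_ne j i with rfl | hji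
    · exact min_le_max
    · obtain ⟨q, hqj, hqi⟩ := hcross j i hji
      exact le_trans (proj_openSegment hqj).1 (proj_openSegment hqi).2
  have hRHS : ∑ i, |proj θ (a i) - proj θ (b i)|
      = ∑ x ∈ endpts a b, |proj θ x - t| := by
    rw [sum_endpts a b hdist (fun x => |proj θ x - t|), ← Finset.sum_add_distrib]
    apply Finset.sum_congr rfl
    intro i _
    exact abs_split (hlb i) (hub i)
  have hτsum : ∑ x ∈ endpts a b, |proj θ (τ x) - t| = ∑ x ∈ endpts a b, |proj θ x - t| := by
    exact Finset.sum_nbij' τ τ (fun x hx => hτ.1 x hx) (fun x hx => hτ.1 x hx)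
      (fun x hx => hτ.2.1 x hx) (fun x hx => hτ.2.1 x hx) (fun x hx => rfl)
  have hLHS : ∑ x ∈ endpts a b, |proj θ x - proj θ (τ x)|
      ≤ 2 * ∑ x ∈ endpts a b, |proj θ x - t| := by
    calc ∑ x ∈ endpts a b, |proj θ x - proj θ (τ x)|
        ≤ ∑ x ∈ endpts a b, (|proj θ x - t| + |proj θ (τ x) - t|) := by
          apply Finset.sum_le_sum
          intro x _
          calc |proj θ x - proj θ (τ x)| = |(proj θ x - t) - (proj θ (τ x) - t)| := by ring_nf
            _ ≤ |proj θ x - t| + |proj θ (τ x) - t| := abs_sub _ _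
      _ = 2 * ∑ x ∈ endpts a b, |proj θ x - t| := by
          rw [Finset.sum_add_distrib, hτsum]; ring
  rw [hRHS]
  linarith

theorem pairwise_crossing_globally_max (n : ℕ) (hn : 1 ≤ n)
    (a b : Fin n → Pt)
    (hdist : Function.Injective (Sum.elim a b : Fin n ⊕ Fin n → Pt))
    (hgen : ∀ i j k : Fin n ⊕ Fin n, i ≠ j → i ≠ k → j ≠ k →
      ¬ Collinear ℝ ({Sum.elim a b i, Sum.elim a b j, Sum.elim a b k} : Set Pt))
    (hcross : ∀ i j : Fin n, i ≠ j →
      (openSegment ℝ (a i) (b i) ∩ openSegment ℝ (a j) (b j)).Nonempty)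
    (τ : Pt → Pt) (hτ : IsFpfInvolOn (endpts a b) τ) :
    (1/2) * ∑ x ∈ endpts a b, dist x (τ x) ≤ ∑ i, dist (a i) (b i) := by
  classical
  have key : ∀ x y : Pt, dist x y = (1/4) * ∫ θ in (0:ℝ)..(2*π), |proj θ x - proj θ y| := by
    intro x y; rw [integral_abs_proj]; ring
  have h1 : ∑ x ∈ endpts a b, dist x (τ x)
      = (1/4) * ∫ θ in (0:ℝ)..(2*π), ∑ x ∈ endpts a b, |proj θ x - proj θ (τ x)| := by
    rw [intervalIntegral.integral_finset_sum (fun x _ => projIntegrable x (τ x)),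
      Finset.mul_sum]
    exact Finset.sum_congr rfl (fun x _ => key x (τ x))
  have h2 : ∑ i, dist (a i) (b i)
      = (1/4) * ∫ θ in (0:ℝ)..(2*π), ∑ i, |proj θ (a i) - proj θ (b i)| := by
    rw [intervalIntegral.integral_finset_sum (fun i _ => projIntegrable (a i) (b i)),
      Finset.mul_sum]
    exact Finset.sum_congr rfl (fun i _ => key (a i) (b i))
  have hmono : ∫ θ in (0:ℝ)..(2*π), ∑ x ∈ endpts a b, |proj θ x - proj θ (τ x)|
      ≤ ∫ θ in (0:ℝ)..(2*π), (2 : ℝ) * ∑ i, |proj θ (a i) - proj θ (b i)| := by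
    apply intervalIntegral.integral_mono_on (by positivity)
    · exact (continuous_finset_sum _ (fun x _ => proj_continuous x (τ x))).intervalIntegrable _ _
    · exact (continuous_const.mul
        (continuous_finset_sum _ (fun i _ => proj_continuous (a i) (b i)))).intervalIntegrable _ _
    · intro θ _
      have := perdir hn a b hdist hcross τ hτ θ
      linarith
  have hconst : ∫ θ in (0:ℝ)..(2*π), (2 : ℝ) * ∑ i, |proj θ (a i) - proj θ (b i)|
      = 2 * ∫ θ in (0:ℝ)..(2*π), ∑ i, |proj θ (a i) - proj θ (b i)| :=
    intervalIntegral.integral_const_mul _ _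
  rw [h1, h2]
  rw [hconst] at hmono
  linarith

end
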